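/- Fix integers M > 1 and 1 ≤ A < M. There exists a constant β < ∞ such that for all y ∈ [0,1], |Σ_{j=1}^{∞} [ log(1 + y^{1/M^j} + y^{2/M^j} + ⋯ + y^{(A−1)/M^j}) − y^{1/M^j} log A ]| ≤ β. -/

import Mathlib

set_option maxHeartbeats 1000000

private lemma geom_half_le (n : ℕ) : ∑ k ∈ Finset.range n, (1/2:ℝ)^k ≤ 2 := by
  have h := geom_sum_eq (by norm_num : (1/2:ℝ) ≠ 1) n
  rw [h]
  have h0 : (0:ℝ) ≤ (1/2:ℝ)^n := by positivity
  rw [div_le_iff_of_neg (by norm_num : (1/2:ℝ) - 1 < 0)]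
  linarith

private lemma one_le_S (A : ℕ) (hA1 : 1 ≤ A) (x : ℝ) (hx0 : 0 ≤ x) :
    1 ≤ ∑ i ∈ Finset.range A, x ^ i := by
  calc (1:ℝ) = x ^ 0 := (pow_zero x).symm
  _ ≤ ∑ i ∈ Finset.range A, x ^ i :=
    Finset.single_le_sum (fun i _ => pow_nonneg hx0 i) (Finset.mem_range.mpr (by omega))

private lemma aux_h1 (A : ℕ) (hA1 : 1 ≤ A) (x : ℝ) (hx0 : 0 ≤ x) (hx1 : x ≤ 1) :
    |Real.log (∑ i ∈ Finset.range A, x ^ i) - x * Real.log A| ≤ ((A:ℝ) + Real.log A + 1) * x := by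
  have hS1 : 1 ≤ ∑ i ∈ Finset.range A, x ^ i := one_le_S A hA1 x hx0
  have hA0 : (1:ℝ) ≤ (A:ℝ) := by exact_mod_cast hA1
  have hlogA : 0 ≤ Real.log A := Real.log_nonneg hA0
  have hSle : (∑ i ∈ Finset.range A, x ^ i) ≤ 1 + (A:ℝ) * x := by
    obtain ⟨B, rfl⟩ : ∃ B, A = B + 1 := ⟨A - 1, by omega⟩
    rw [Finset.sum_range_succ']
    have h1 : ∑ i ∈ Finset.range B, x ^ (i+1) ≤ ∑ _i ∈ Finset.range B, x := by
      apply Finset.sum_le_sum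
      intro i _
      calc x ^ (i+1) ≤ x ^ 1 := pow_le_pow_of_le_one hx0 hx1 (by omega)
      _ = x := pow_one x
    rw [Finset.sum_const, Finset.card_range, nsmul_eq_mul] at h1
    have hBA : (B:ℝ) * x ≤ ((B:ℝ)+1) * x := by nlinarith
    push_cast
    simp only [pow_zero]
    linarith
  have hlogS_nonneg : 0 ≤ Real.log (∑ i ∈ Finset.range A, x ^ i) := Real.log_nonneg hS1
  have hlogS_le : Real.log (∑ i ∈ Finset.range A, x ^ i) ≤ (A:ℝ) * x := by
    have := Real.log_le_sub_one_of_pos (show (0:ℝ) < ∑ i ∈ Finset.range A, x ^ i by linarith)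
    linarith
  rw [abs_le]
  constructor
  · nlinarith
  · nlinarith

private lemma aux_h2 (A : ℕ) (hA1 : 1 ≤ A) (x : ℝ) (hx0 : 0 ≤ x) (hx1 : x ≤ 1) :
    |Real.log (∑ i ∈ Finset.range A, x ^ i) - x * Real.log A| ≤
      2 * ((A:ℝ) + Real.log A + 1) * (1 - x) := by
  have hA0 : (1:ℝ) ≤ (A:ℝ) := by exact_mod_cast hA1
  have hlogA : 0 ≤ Real.log A := Real.log_nonneg hA0
  rcases le_or_gt x (1/2) with hhalf | hhalf
  · have h1 := aux_h1 A hA1 x hx0 hx1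
    nlinarith [h1]
  · have hxpos : (0:ℝ) < x := by linarith
    have hS1 : 1 ≤ ∑ i ∈ Finset.range A, x ^ i := one_le_S A hA1 x hx0
    have hSA : (∑ i ∈ Finset.range A, x ^ i) ≤ (A:ℝ) := by
      calc (∑ i ∈ Finset.range A, x ^ i) ≤ ∑ _i ∈ Finset.range A, (1:ℝ) :=
            Finset.sum_le_sum (fun i _ => pow_le_one₀ hx0 hx1)
      _ = (A:ℝ) := by simp
    have hupper : Real.log (∑ i ∈ Finset.range A, x ^ i) ≤ Real.log A :=
      Real.log_le_log (by linarith) hSA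
    have hlowS : (A:ℝ) * x ^ A ≤ ∑ i ∈ Finset.range A, x ^ i := by
      calc (A:ℝ) * x ^ A = ∑ _i ∈ Finset.range A, x ^ A := by
            rw [Finset.sum_const, Finset.card_range, nsmul_eq_mul]
      _ ≤ ∑ i ∈ Finset.range A, x ^ i :=
        Finset.sum_le_sum (fun i hi =>
          pow_le_pow_of_le_one hx0 hx1 (le_of_lt (Finset.mem_range.mp hi)))
    have hlow : Real.log A + (A:ℝ) * Real.log x ≤ Real.log (∑ i ∈ Finset.range A, x ^ i) := by
      have hpos : (0:ℝ) < (A:ℝ) * x ^ A := by positivity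
      calc Real.log A + (A:ℝ) * Real.log x = Real.log ((A:ℝ) * x ^ A) := by
            rw [Real.log_mul (by linarith) (by positivity), Real.log_pow]
      _ ≤ Real.log (∑ i ∈ Finset.range A, x ^ i) := Real.log_le_log hpos hlowS
    have hlogx : -2*(1-x) ≤ Real.log x := by
      have h := Real.log_le_sub_one_of_pos (show (0:ℝ) < x⁻¹ by positivity)
      rw [Real.log_inv] at h
      have hxx : x * x⁻¹ = 1 := mul_inv_cancel₀ (ne_of_gt hxpos)
      have hinv0 : (0:ℝ) ≤ x⁻¹ := inv_nonneg.mpr hx0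
      nlinarith [h, hxx, hx1, hhalf, hinv0]
    have hAlogx : (A:ℝ) * (-2*(1-x)) ≤ (A:ℝ) * Real.log x :=
      mul_le_mul_of_nonneg_left hlogx (by linarith)
    rw [abs_le]
    constructor
    · nlinarith
    · nlinarith

theorem stmt_15 (M A : ℕ) (hM : 1 < M) (hA1 : 1 ≤ A) (hAM : A < M) :
    ∃ β : ℝ, ∀ y ∈ Set.Icc (0 : ℝ) 1,
      |∑' j : ℕ,
          (Real.log (∑ i ∈ Finset.range A, y ^ ((i : ℝ) / M ^ (j + 1))) -
            y ^ ((1 : ℝ) / M ^ (j + 1)) * Real.log A)| ≤ β := by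
  classical
  set C : ℝ := (A:ℝ) + Real.log A + 1 with hC
  have hA0 : (1:ℝ) ≤ (A:ℝ) := by exact_mod_cast hA1
  have hlogA : 0 ≤ Real.log A := Real.log_nonneg hA0
  have hC1 : 1 ≤ C := by rw [hC]; linarith
  have hM2 : (2:ℝ) ≤ (M:ℝ) := by exact_mod_cast hM
  refine ⟨4 * C, ?_⟩
  intro y hy
  obtain ⟨hy0, hy1⟩ := hy
  set x : ℕ → ℝ := fun j => y ^ ((1:ℝ) / (M:ℝ) ^ (j+1)) with hxdef
  have hMp : ∀ j : ℕ, (0:ℝ) < (M:ℝ) ^ (j+1) := fun j => by positivity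
  have hx0 : ∀ j, 0 ≤ x j := fun j => Real.rpow_nonneg hy0 _
  have hx1 : ∀ j, x j ≤ 1 := fun j => Real.rpow_le_one hy0 hy1 (by positivity)
  set f : ℕ → ℝ := fun j =>
    Real.log (∑ i ∈ Finset.range A, (x j) ^ i) - x j * Real.log A with hf
  have hterm : (∑' j : ℕ,
      (Real.log (∑ i ∈ Finset.range A, y ^ ((i : ℝ) / M ^ (j + 1))) -
        y ^ ((1 : ℝ) / M ^ (j + 1)) * Real.log A)) = ∑' j, f j := by
    apply tsum_congr
    intro j
    rw [hf]
    congr 2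
    apply Finset.sum_congr rfl
    intro i _
    rw [hxdef]
    rw [← Real.rpow_natCast (y ^ ((1:ℝ) / (M:ℝ) ^ (j+1))) i, ← Real.rpow_mul hy0]
    congr 1
    field_simp
  rw [hterm]
  have hb1 : ∀ j, |f j| ≤ C * x j := fun j => aux_h1 A hA1 (x j) (hx0 j) (hx1 j)
  have hb2 : ∀ j, |f j| ≤ 2 * C * (1 - x j) := fun j => aux_h2 A hA1 (x j) (hx0 j) (hx1 j)
  rcases eq_or_lt_of_le hy0 with h0 | hypos
  · -- y = 0
    have hxz : ∀ j, x j = 0 := by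
      intro j
      rw [hxdef, ← h0]
      exact Real.zero_rpow (by positivity)
    have hfz : ∀ j : ℕ, f j = 0 := by
      intro j
      have h := hb1 j
      rw [hxz j, mul_zero] at h
      exact abs_eq_zero.mp (le_antisymm h (abs_nonneg _))
    rw [tsum_congr hfz, tsum_zero]
    simp only [abs_zero]
    linarith
  · -- y > 0
    have hlogy : Real.log y ≤ 0 := Real.log_nonpos (le_of_lt hypos) hy1
    set L : ℝ := -Real.log y with hL
    have hL0 : 0 ≤ L := by rw [hL]; linarith
    have hxexp : ∀ j, x j = Real.exp (-(L / (M:ℝ)^(j+1))) := by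
      intro j
      show y ^ ((1:ℝ) / (M:ℝ) ^ (j+1)) = Real.exp (-(L / (M:ℝ)^(j+1)))
      rw [Real.rpow_def_of_pos hypos]
      congr 1
      rw [hL]
      field_simp
    have h1mx : ∀ j, 1 - x j ≤ L / (M:ℝ)^(j+1) := by
      intro j
      rw [hxexp j]
      have := Real.add_one_le_exp (-(L / (M:ℝ)^(j+1)))
      linarith
    have habs_le : ∀ j, |f j| ≤ 2*C*L * (1/2:ℝ)^j := by
      intro j
      have hp2 : (2:ℝ)^j ≤ (M:ℝ)^(j+1) := by
        calc (2:ℝ)^j ≤ (M:ℝ)^j := pow_le_pow_left₀ (by norm_num) hM2 j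
        _ ≤ (M:ℝ)^(j+1) := pow_le_pow_right₀ (by linarith) (by omega)
      have hdiv : L / (M:ℝ)^(j+1) ≤ L * (1/2:ℝ)^j := by
        have h2p : (0:ℝ) < (2:ℝ)^j := by positivity
        rw [div_le_iff₀ (hMp j)]
        have : L * ((1/2:ℝ)^j * (2:ℝ)^j) ≤ L * ((1/2:ℝ)^j * (M:ℝ)^(j+1)) := by
          apply mul_le_mul_of_nonneg_left _ hL0
          apply mul_le_mul_of_nonneg_left hp2 (by positivity)
        have hone : (1/2:ℝ)^j * (2:ℝ)^j = 1 := by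
          rw [← mul_pow]; norm_num
        rw [hone, mul_one] at this
        linarith [this]
      calc |f j| ≤ 2*C*(1 - x j) := hb2 j
      _ ≤ 2*C*(L/(M:ℝ)^(j+1)) := mul_le_mul_of_nonneg_left (h1mx j) (by linarith)
      _ ≤ 2*C*(L * (1/2:ℝ)^j) := mul_le_mul_of_nonneg_left hdiv (by linarith)
      _ = 2*C*L * (1/2:ℝ)^j := by ring
    have hsum_abs : Summable (fun j => |f j|) := by
      apply Summable.of_nonneg_of_le (fun j => abs_nonneg _) habs_le
      exact (summable_geometric_of_lt_one (by norm_num) (by norm_num)).mul_left _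
    have habs_tsum : |∑' j, f j| ≤ ∑' j, |f j| := by
      have := norm_tsum_le_tsum_norm (f := f) (by simpa [Real.norm_eq_abs] using hsum_abs)
      simpa [Real.norm_eq_abs] using this
    -- choose n
    have hex : ∃ n : ℕ, L ≤ (M:ℝ)^n := by
      refine ⟨⌈L⌉₊, ?_⟩
      calc L ≤ (⌈L⌉₊ : ℝ) := Nat.le_ceil L
      _ ≤ (2:ℝ) ^ ⌈L⌉₊ := by exact_mod_cast (Nat.lt_two_pow_self (n := ⌈L⌉₊)).le
      _ ≤ (M:ℝ) ^ ⌈L⌉₊ := pow_le_pow_left₀ (by norm_num) hM2 _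
    obtain ⟨n, hn, hnmin⟩ : ∃ n : ℕ, L ≤ (M:ℝ)^n ∧ ∀ m < n, (M:ℝ)^m < L := by
      refine ⟨Nat.find hex, Nat.find_spec hex, ?_⟩
      intro m hm
      have h := Nat.find_min hex hm
      push_neg at h
      exact h
    -- head
    have hhead : ∑ j ∈ Finset.range n, |f j| ≤ 2 * C := by
      have hxle : ∀ j < n, x j ≤ (Real.exp (-1)) ^ (n - 1 - j) := by
        intro j hj
        rw [hxexp j, ← Real.exp_nat_mul]
        apply Real.exp_le_exp.mpr
        rcases Nat.lt_or_ge j (n-1) with hj2 | hj2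
        · have h2p := Nat.lt_two_pow_self (n := n-2-j)
          have hnat : (n - 1 - j) * M^(j+1) ≤ M^(n-1) := by
            calc (n-1-j) * M^(j+1) ≤ 2^(n-2-j) * M^(j+1) :=
                  Nat.mul_le_mul_right _ (by omega)
            _ ≤ M^(n-2-j) * M^(j+1) :=
                  Nat.mul_le_mul_right _ (Nat.pow_le_pow_left (by omega : 2 ≤ M) _)
            _ = M^(n-1) := by rw [← pow_add]; congr 1; omega
          have hML := hnmin (n-1) (by omega)
          have hdiv : ((n-1-j:ℕ):ℝ) ≤ L / (M:ℝ)^(j+1) := by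
            rw [le_div_iff₀ (hMp j)]
            calc ((n-1-j:ℕ):ℝ) * (M:ℝ)^(j+1) = (((n-1-j) * M^(j+1) : ℕ) : ℝ) := by
                  push_cast; ring
            _ ≤ ((M^(n-1):ℕ):ℝ) := by exact_mod_cast hnat
            _ ≤ L := by
                  have : ((M:ℝ))^(n-1) < L := hML
                  push_cast
                  linarith
          linarith [hdiv]
        · have hz : n - 1 - j = 0 := by omega
          rw [hz]
          simp only [Nat.cast_zero, zero_mul, neg_nonpos]
          positivity
      have hexp_half : Real.exp (-1) ≤ (1/2:ℝ) := by
        have h2e : (2:ℝ) ≤ Real.exp 1 := by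
          have := Real.add_one_le_exp (1:ℝ)
          linarith
        rw [Real.exp_neg]
        rw [inv_le_comm₀ (Real.exp_pos 1) (by norm_num)] at *
        · linarith
      calc ∑ j ∈ Finset.range n, |f j|
          ≤ ∑ j ∈ Finset.range n, C * ((Real.exp (-1))^(n-1-j)) := by
            apply Finset.sum_le_sum
            intro j hj
            exact le_trans (hb1 j)
              (mul_le_mul_of_nonneg_left (hxle j (Finset.mem_range.mp hj)) (by linarith))
      _ = C * ∑ j ∈ Finset.range n, (Real.exp (-1))^(n-1-j) := by rw [Finset.mul_sum]
      _ = C * ∑ j ∈ Finset.range n, (Real.exp (-1))^j := by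
            rw [Finset.sum_range_reflect (fun j => (Real.exp (-1))^j) n]
      _ ≤ C * ∑ j ∈ Finset.range n, (1/2:ℝ)^j := by
            apply mul_le_mul_of_nonneg_left _ (by linarith)
            apply Finset.sum_le_sum
            intro j _
            exact pow_le_pow_left₀ (Real.exp_nonneg _) hexp_half j
      _ ≤ C * 2 := mul_le_mul_of_nonneg_left (geom_half_le n) (by linarith)
      _ = 2 * C := by ring
    -- tail
    have htail_le : ∀ k : ℕ, |f (k + n)| ≤ (2*C) * (1/2:ℝ)^(k+1) := by
      intro k
      have hdiv : L / (M:ℝ)^(k+n+1) ≤ (1/2:ℝ)^(k+1) := by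
        rw [div_le_iff₀ (by positivity)]
        have hsplit : (M:ℝ)^(k+n+1) = (M:ℝ)^(k+1) * (M:ℝ)^n := by
          rw [← pow_add]; congr 1; omega
        have h1 : (1:ℝ) ≤ (1/2:ℝ)^(k+1) * (M:ℝ)^(k+1) := by
          rw [← mul_pow]
          apply one_le_pow₀
          linarith
        have hMn : (0:ℝ) ≤ (M:ℝ)^n := by positivity
        calc L ≤ (M:ℝ)^n := hn
        _ ≤ ((1/2:ℝ)^(k+1) * (M:ℝ)^(k+1)) * (M:ℝ)^n := le_mul_of_one_le_left hMn h1
        _ = (1/2:ℝ)^(k+1) * (M:ℝ)^(k+n+1) := by rw [hsplit]; ring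
      calc |f (k+n)| ≤ 2*C*(1 - x (k+n)) := hb2 _
      _ ≤ 2*C*(L/(M:ℝ)^(k+n+1)) := mul_le_mul_of_nonneg_left (h1mx _) (by linarith)
      _ ≤ (2*C) * (1/2:ℝ)^(k+1) := mul_le_mul_of_nonneg_left hdiv (by linarith)
    have htail : ∑' k : ℕ, |f (k + n)| ≤ 2*C := by
      have hsum_shift : Summable (fun k : ℕ => |f (k + n)|) :=
        (summable_nat_add_iff n).mpr hsum_abs
      have hgeo' : Summable (fun k : ℕ => (1/2:ℝ)^(k+1)) := by
        have h := (summable_geometric_of_lt_one (show (0:ℝ) ≤ 1/2 by norm_num)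
          (by norm_num : (1/2:ℝ) < 1)).comp_injective (add_left_injective 1)
        exact h
      have h1 : ∑' k : ℕ, |f (k + n)| ≤ ∑' k : ℕ, (2*C) * (1/2:ℝ)^(k+1) :=
        Summable.tsum_le_tsum htail_le hsum_shift (hgeo'.mul_left _)
      have h2 : ∑' k : ℕ, (2*C) * (1/2:ℝ)^(k+1) = (2*C) * ∑' k : ℕ, (1/2:ℝ)^(k+1) :=
        tsum_mul_left
      have h3 : ∑' k : ℕ, (1/2:ℝ)^(k+1) = 1 := by
        have : ∑' k : ℕ, (1/2:ℝ)^(k+1) = (1/2) * ∑' k : ℕ, (1/2:ℝ)^k := by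
          rw [← tsum_mul_left]
          exact tsum_congr (fun k => by rw [← pow_succ'])
        rw [this, tsum_geometric_of_lt_one (by norm_num) (by norm_num)]
        norm_num
      rw [h2, h3] at h1
      linarith
    calc |∑' j, f j| ≤ ∑' j, |f j| := habs_tsum
    _ = (∑ j ∈ Finset.range n, |f j|) + ∑' k : ℕ, |f (k + n)| :=
        (Summable.sum_add_tsum_nat_add n hsum_abs).symm
    _ ≤ 2*C + 2*C := add_le_add hhead htail
    _ = 4*C := by ring
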